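/- Let p be a prime and m ∈ ℕ. For every natural number k with k ≥ p^m, the element ⟨k choose p^m⟩_{(m),q} of ℚ(q) lies in ℤ[q]_{(p,q−1)} and is congruent to 1 modulo the maximal ideal (p, q−1)·ℤ[q]_{(p,q−1)}; in particular it is a unit in ℤ[q]_{(p,q−1)}. -/

import Mathlib

noncomputable section

open Polynomial

/-- `ℤ[q]`, the polynomial ring in one variable `q` over `ℤ`. -/
abbrev Zq : Type := Polynomial ℤ

/-- `ℚ(q)`, realized as the fraction field of `ℤ[q]`. -/
abbrev Qq : Type := FractionRing Zq

/-- The canonical embedding `ℤ[q] → ℚ(q)`. -/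
def ι : Zq →+* Qq := algebraMap Zq Qq

/-- The image of the variable `q` in `ℚ(q)`. -/
def qQ : Qq := ι X

/-- The `q^a`-integer `(n)_{q^a} = 1 + q^a + ⋯ + q^{a(n-1)}` in `ℤ[q]`. -/
def qInt (a n : ℕ) : Zq := ∑ j ∈ Finset.range n, X ^ (a * j)

/-- The `q^a`-factorial `(n)_{q^a}! = ∏_{i=1}^{n} (i)_{q^a}` in `ℤ[q]`. -/
def qFact (a n : ℕ) : Zq := ∏ i ∈ Finset.range n, qInt a (i + 1)

/-- The prime ideal `(p, q - 1)` of `ℤ[q]`. -/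
def pqIdeal (p : ℕ) : Ideal Zq := Ideal.span {C (p : ℤ), X - 1}

/-- Membership in the localization `ℤ[q]_{(p,q-1)}`, viewed inside `ℚ(q)`:
`x = a / b` with `b ∉ (p, q-1)`. -/
def InLoc (p : ℕ) (x : Qq) : Prop :=
  ∃ a b : Zq, b ∉ pqIdeal p ∧ x * ι b = ι a

/-- Being a unit of the localization `ℤ[q]_{(p,q-1)}`, viewed inside `ℚ(q)`:
`x = a / b` with `a, b ∉ (p, q-1)`. -/
def IsLocUnit (p : ℕ) (x : Qq) : Prop :=
  ∃ a b : Zq, a ∉ pqIdeal p ∧ b ∉ pqIdeal p ∧ x * ι b = ι a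

/-- The Gaussian `q`-binomial coefficient `(k choose k')_q` as an element of `ℚ(q)`. -/
def qBinomF (k k' : ℕ) : Qq :=
  ι (qFact 1 k) / (ι (qFact 1 k') * ι (qFact 1 (k - k')))

/-- The level-`m` coefficient `{k choose k'}_{(m),q}` as an element of `ℚ(q)`. -/
def braceC (p m k k' : ℕ) : Qq :=
  ι (qFact (p ^ m) (k / p ^ m)) /
    (ι (qFact (p ^ m) (k' / p ^ m)) * ι (qFact (p ^ m) ((k - k') / p ^ m)))

/-- The level-`m` coefficient `⟨k choose k'⟩_{(m),q}` as an element of `ℚ(q)`. -/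
def angleC (p m k k' : ℕ) : Qq := qBinomF k k' * (braceC p m k k')⁻¹

def phi (p : ℕ) : Zq →+* ZMod p := (Int.castRingHom (ZMod p)).comp (evalRingHom 1)

lemma phi_apply (p : ℕ) (f : Zq) : phi p f = ((f.eval 1 : ℤ) : ZMod p) := rfl

lemma eval_qInt (a n : ℕ) : (qInt a n).eval 1 = (n : ℤ) := by
  simp [qInt, eval_finset_sum]

lemma phi_qInt (p a n : ℕ) : phi p (qInt a n) = (n : ZMod p) := by
  rw [phi_apply, eval_qInt]; push_cast; ring

lemma qInt_ne_zero (a n : ℕ) (hn : 0 < n) : qInt a n ≠ 0 := by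
  intro h
  have := eval_qInt a n
  rw [h] at this
  simp at this
  omega

lemma eval_qFact_ne (a n : ℕ) : (qFact a n).eval 1 ≠ 0 := by
  simp only [qFact, eval_prod, eval_qInt]
  rw [Finset.prod_ne_zero_iff]
  intro i _
  positivity

lemma qFact_ne_zero (a n : ℕ) : qFact a n ≠ 0 := by
  intro h; exact eval_qFact_ne a n (by rw [h]; simp)

lemma iota_ne_zero {f : Zq} (hf : f ≠ 0) : ι f ≠ 0 := by
  simp [ι, IsFractionRing.to_map_eq_zero_iff, hf]

lemma iota_qFact_ne (a n : ℕ) : ι (qFact a n) ≠ 0 := iota_ne_zero (qFact_ne_zero a n)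

lemma iota_qInt_ne (a n : ℕ) (hn : 0 < n) : ι (qInt a n) ≠ 0 := iota_ne_zero (qInt_ne_zero a n hn)

lemma qFact_succ (a n : ℕ) : qFact a (n+1) = qFact a n * qInt a (n+1) :=
  Finset.prod_range_succ _ _

lemma qFact_zero (a : ℕ) : qFact a 0 = 1 := by simp [qFact]

lemma qInt_one' (a : ℕ) : qInt a 1 = 1 := by simp [qInt]

lemma qFact_one (a : ℕ) : qFact a 1 = 1 := by rw [qFact_succ, qFact_zero, qInt_one', one_mul]

lemma qInt_mul (a b c : ℕ) : qInt a (b * c) = qInt a b * qInt (a * b) c := by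
  induction c with
  | zero => simp [qInt]
  | succ c ih =>
    have h : b * (c + 1) = b * c + b := by ring
    rw [h, qInt, ← Finset.sum_range_add_sum_Ico _ (Nat.le_add_right (b*c) b),
      Finset.sum_Ico_eq_sum_range]
    simp only [Nat.add_sub_cancel_left]
    rw [qInt] at ih ⊢
    rw [ih]  -- hopefully first sum matches qInt a (b*c)
    rw [show qInt (a*b) (c+1) = qInt (a*b) c + X^(a*b*c) by
      rw [qInt, qInt, Finset.sum_range_succ]]
    have h2 : ∀ i, a * (b * c + i) = a * b * c + a * i := fun i => by ring
    simp only [h2]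
    simp only [pow_add]
    rw [qInt, qInt, ← Finset.mul_sum]
    ring

lemma mem_pqIdeal_iff (p : ℕ) (f : Zq) : f ∈ pqIdeal p ↔ phi p f = 0 := by
  constructor
  · intro h
    have hle : pqIdeal p ≤ RingHom.ker (phi p) := by
      rw [pqIdeal, Ideal.span_le]
      rintro g hg
      simp only [Set.mem_insert_iff, Set.mem_singleton_iff] at hg
      rcases hg with rfl | rfl <;>
        simp [RingHom.mem_ker, phi, SetLike.mem_coe]
    exact hle h
  · intro h
    have hdvd : (p : ℤ) ∣ f.eval 1 := by
      have : ((f.eval 1 : ℤ) : ZMod p) = 0 := h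
      exact_mod_cast (ZMod.intCast_zmod_eq_zero_iff_dvd _ p).mp this
    obtain ⟨c, hc⟩ := hdvd
    have hroot : (X - 1 : Zq) ∣ (f - C (f.eval 1)) := by
      have : (X - C (1:ℤ)) ∣ (f - C (f.eval 1)) := by
        rw [dvd_iff_isRoot]
        simp [IsRoot]
      simpa using this
    obtain ⟨g, hg⟩ := hroot
    have hX1 : (X - 1 : Zq) ∈ pqIdeal p := Ideal.subset_span (by simp)
    have hCp : (C (p:ℤ) : Zq) ∈ pqIdeal p := Ideal.subset_span (by simp)
    have : f = (X - 1) * g + C (p:ℤ) * C c := by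
      rw [← hg, ← C_mul, ← hc]; ring
    rw [this]
    exact Ideal.add_mem _ (Ideal.mul_mem_right _ _ hX1) (Ideal.mul_mem_right _ _ hCp)

-- case B : p^m ∣ k+1
lemma angleC_succ_dvd (p m k s : ℕ) (hp : 0 < p) (hk : p ^ m ≤ k)
    (ht : k + 1 = p ^ m * (s + 2)) :
    angleC p m (k + 1) (p ^ m) = angleC p m k (p ^ m) := by
  simp only [angleC, qBinomF, braceC]
  obtain ⟨N, hNdef⟩ : ∃ N, N = p ^ m := ⟨_, rfl⟩
  rw [← hNdef] at hk ht ⊢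
  have hN0 : 0 < N := hNdef ▸ pow_pos hp m
  have hkN : k = (N - 1) + N * (s + 1) := by
    have : N * (s + 2) = N * (s + 1) + N := by ring
    omega
  have hd1 : k / N = s + 1 := by
    rw [hkN, Nat.add_mul_div_left _ _ hN0, Nat.div_eq_of_lt (by omega)]
    omega
  have hd2 : (k - N) / N = s := by
    have : k - N = (N - 1) + N * s := by
      have : N * (s + 1) = N * s + N := by ring
      omega
    rw [this, Nat.add_mul_div_left _ _ hN0, Nat.div_eq_of_lt (by omega)]
    omega
  have hd3 : (k + 1) / N = s + 2 := by rw [ht, Nat.mul_div_cancel_left _ hN0]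
  have hd4 : ((k - N) + 1) / N = s + 1 := by
    have hs : (k - N) + 1 = k + 1 - N := by omega
    rw [hs]
    have h5 : k + 1 - N = N * (s + 1) := by
      have : N * (s + 2) = N * (s + 1) + N := by ring
      omega
    rw [h5, Nat.mul_div_cancel_left _ hN0]
  have hsub : k + 1 - N = (k - N) + 1 := by omega
  have hq1 : qInt 1 (k + 1) = qInt 1 N * qInt N (s + 2) := by
    rw [ht, qInt_mul]; norm_num
  have hq2 : qInt 1 ((k - N) + 1) = qInt 1 N * qInt N (s + 1) := by
    have : (k - N) + 1 = N * (s + 1) := by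
      have : N * (s + 2) = N * (s + 1) + N := by ring
      omega
    rw [this, qInt_mul]; norm_num
  simp only [hsub, hd1, hd2, hd3, hd4, Nat.div_self hN0,
    Nat.sub_self, Nat.zero_div, qFact_one, qFact_zero]
  rw [qFact_succ 1 k, qFact_succ 1 (k - N), qFact_succ N (s + 1), qFact_succ N s,
    hq1, hq2]
  have e1 := iota_qFact_ne 1 k
  have e2 := iota_qFact_ne 1 N
  have e3 := iota_qFact_ne 1 (k - N)
  have e4 := iota_qFact_ne N s
  have e5 := iota_qInt_ne N (s + 1) (by omega)
  have e6 := iota_qInt_ne N (s + 2) (by omega)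
  have e7 := iota_qInt_ne 1 N hN0
  have e5' : ι (qInt N (1 + s)) ≠ 0 := by rwa [add_comm]
  have e6' : ι (qInt N (2 + s)) ≠ 0 := by rwa [add_comm]
  simp only [map_mul, map_one, one_mul, mul_one]
  have e6'' : ι (qInt N (s + 1 + 1)) ≠ 0 := iota_qInt_ne _ _ (by omega)
  set_option synthInstance.maxHeartbeats 1000000 in
  field_simp

lemma angleC_succ_not_dvd (p m k A u u' : ℕ) (hp : 0 < p) (hk : p ^ m ≤ k)
    (hdvd : ¬ p ^ m ∣ (k + 1))
    (hA : 0 < A) (hu0 : 0 < u) (hu'0 : 0 < u')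
    (hu : k + 1 = A * u) (hu' : (k - p ^ m) + 1 = A * u') :
    angleC p m (k + 1) (p ^ m) * ι (qInt A u') = angleC p m k (p ^ m) * ι (qInt A u) := by
  simp only [angleC, qBinomF, braceC]
  obtain ⟨N, hNdef⟩ : ∃ N, N = p ^ m := ⟨_, rfl⟩
  rw [← hNdef] at hk hdvd hu' ⊢
  have hN0 : 0 < N := hNdef ▸ pow_pos hp m
  have hd3 : (k + 1) / N = k / N := Nat.succ_div_of_not_dvd hdvd
  have hsub : k + 1 - N = (k - N) + 1 := by omega
  have hd4 : ((k - N) + 1) / N = (k - N) / N := by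
    refine Nat.succ_div_of_not_dvd ?_
    intro hc
    apply hdvd
    have h2 : N ∣ (k - N + 1) + N := dvd_add hc dvd_rfl
    rwa [show k - N + 1 + N = k + 1 by omega] at h2
  have hq1 : qInt 1 (k + 1) = qInt 1 A * qInt A u := by rw [hu, qInt_mul]; norm_num
  have hq2 : qInt 1 ((k - N) + 1) = qInt 1 A * qInt A u' := by rw [hu', qInt_mul]; norm_num
  simp only [hd3, hsub, hd4, Nat.div_self hN0, qFact_one]
  rw [qFact_succ 1 k, qFact_succ 1 (k - N), hq1, hq2]
  have e1 := iota_qFact_ne 1 k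
  have e2 := iota_qFact_ne 1 N
  have e3 := iota_qFact_ne 1 (k - N)
  have e4 := iota_qFact_ne N (k / N)
  have e5 := iota_qFact_ne N ((k - N) / N)
  have e6 := iota_qInt_ne 1 A hA
  have e7 := iota_qInt_ne A u hu0
  have e8 := iota_qInt_ne A u' hu'0
  simp only [map_mul, map_one, one_mul, mul_one]
  set_option synthInstance.maxHeartbeats 1000000 in
  field_simp

lemma angleC_step (p : ℕ) (hp : p.Prime) (m k : ℕ) (hk : p ^ m ≤ k) :
    ∃ c d : Zq, phi p c = phi p d ∧ phi p d ≠ 0 ∧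
      angleC p m (k + 1) (p ^ m) * ι d = angleC p m k (p ^ m) * ι c := by
  haveI := Fact.mk hp
  by_cases hdvd : p ^ m ∣ (k + 1)
  · -- divisible case
    obtain ⟨t, ht⟩ := hdvd
    have hN0 : 0 < p ^ m := pow_pos hp.pos m
    obtain ⟨s, hs⟩ : ∃ s, t = s + 2 := by
      rcases t with _ | t
      · omega
      · rcases t with _ | s
        · exfalso; omega
        · exact ⟨s, rfl⟩
    subst hs
    refine ⟨1, 1, rfl, ?_, ?_⟩
    · rw [map_one]; exact one_ne_zero
    · rw [angleC_succ_dvd p m k s hp.pos hk ht]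
  · -- non-divisible case
    have hN0 : 0 < p ^ m := pow_pos hp.pos m
    set j := (k + 1).factorization p with hj
    set A := p ^ j with hAdef
    have hA : 0 < A := pow_pos hp.pos j
    have hAd : A ∣ k + 1 := Nat.ordProj_dvd (k + 1) p
    set u := (k + 1) / A with hudef
    have hu : k + 1 = A * u := (Nat.mul_div_cancel' hAd).symm
    have hpu : ¬ p ∣ u := Nat.not_dvd_ordCompl hp (by omega)
    have hjm : j < m := by
      by_contra hc
      exact hdvd (dvd_trans (pow_dvd_pow p (by omega)) hAd)
    set w := p ^ (m - j) with hwdef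
    have hNw : p ^ m = A * w := by
      rw [hAdef, hwdef, ← pow_add]
      congr 1
      omega
    have hwu : w < u := by
      have h1 : A * w < A * u := by
        rw [← hNw, ← hu]; omega
      exact lt_of_mul_lt_mul_left h1 (Nat.zero_le A)
    set u' := u - w with hu'def
    have huu : u = u' + w := by omega
    have hu' : (k - p ^ m) + 1 = A * u' := by
      have h1 : A * u = A * u' + A * w := by rw [huu, Nat.mul_add]
      rw [← hNw] at h1
      omega
    have hu0 : 0 < u := by
      rcases Nat.eq_zero_or_pos u with h | h
      · rw [h, Nat.mul_zero] at hu; omega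
      · exact h
    have hu'0 : 0 < u' := by
      rcases Nat.eq_zero_or_pos u' with h | h
      · rw [h, Nat.mul_zero] at hu'; omega
      · exact h
    have hpw : p ∣ w := by
      rw [hwdef]
      exact dvd_pow_self p (by omega)
    refine ⟨qInt A u, qInt A u', ?_, ?_, ?_⟩
    · rw [phi_qInt, phi_qInt]
      obtain ⟨w', hw'⟩ := hpw
      rw [huu, hw']
      push_cast [ZMod.natCast_self]
      ring
    · rw [phi_qInt]
      intro hc
      have : p ∣ u' := (ZMod.natCast_eq_zero_iff u' p).mp hc
      exact hpu (by rw [huu]; exact dvd_add this hpw)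
    · exact angleC_succ_not_dvd p m k A u u' hp.pos hk hdvd hA hu0 hu'0 hu hu'

/-- For `k ≥ p^m`, the element `⟨k choose p^m⟩_{(m),q}` lies in `ℤ[q]_{(p,q-1)}`,
is congruent to `1` modulo `(p, q-1)`, and in particular is a unit of `ℤ[q]_{(p,q-1)}`. -/
theorem stmt12 (p : ℕ) (hp : p.Prime) (m k : ℕ) (hk : p ^ m ≤ k) :
    (∃ a b : Zq, b ∉ pqIdeal p ∧ angleC p m k (p ^ m) * ι b = ι a ∧ a - b ∈ pqIdeal p) ∧
      IsLocUnit p (angleC p m k (p ^ m)) := by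
  haveI := Fact.mk hp
  have key : ∀ n, p ^ m ≤ n → ∃ a b : Zq, b ∉ pqIdeal p ∧
      angleC p m n (p ^ m) * ι b = ι a ∧ a - b ∈ pqIdeal p := by
    intro n hn
    induction n, hn using Nat.le_induction with
    | base =>
      refine ⟨1, 1, ?_, ?_, ?_⟩
      · rw [mem_pqIdeal_iff, map_one]
        exact one_ne_zero
      · have hN0 : 0 < p ^ m := pow_pos hp.pos m
        simp only [angleC, qBinomF, braceC, Nat.sub_self, Nat.div_self hN0, Nat.zero_div,
          qFact_zero, qFact_one, map_one, mul_one, one_mul]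
        rw [div_self (iota_qFact_ne 1 (p ^ m))]
        norm_num
      · simp only [sub_self]
        exact Ideal.zero_mem _
    | succ n hn ih =>
      obtain ⟨a, b, hb, heq, hab⟩ := ih
      obtain ⟨c, d, hcd, hd, hstep⟩ := angleC_step p hp m n hn
      refine ⟨a * c, b * d, ?_, ?_, ?_⟩
      · rw [mem_pqIdeal_iff, map_mul]
        rw [mem_pqIdeal_iff] at hb
        exact mul_ne_zero hb hd
      · rw [map_mul, map_mul]
        calc angleC p m (n + 1) (p ^ m) * (ι b * ι d)
            = (angleC p m (n + 1) (p ^ m) * ι d) * ι b := by ring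
          _ = (angleC p m n (p ^ m) * ι c) * ι b := by rw [hstep]
          _ = (angleC p m n (p ^ m) * ι b) * ι c := by ring
          _ = ι a * ι c := by rw [heq]
      · rw [mem_pqIdeal_iff, map_sub, map_mul, map_mul, hcd]
        rw [mem_pqIdeal_iff, map_sub, sub_eq_zero] at hab
        rw [hab, sub_self]
  obtain ⟨a, b, hb, heq, hab⟩ := key k hk
  have ha : a ∉ pqIdeal p := by
    intro ha
    apply hb
    have h2 : b = a - (a - b) := by ring
    rw [h2]
    exact Ideal.sub_mem _ ha hab
  exact ⟨⟨a, b, hb, heq, hab⟩, a, b, ha, hb, heq⟩
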